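/- Under the ideal generative model, assume E[|log C_1| + |log(1−C_1)|] < ∞ and P(C_1 = 1/K) = 0. Then for every k ≠ 1, the likelihood ratio A_1(m)/A_k(m) tends to +∞ almost surely as m → ∞. -/

import Mathlib

open MeasureTheory ProbabilityTheory Filter

/-- One-versus-rest likelihood: for a response `r` and a confidence `c ∈ (0,1)`, under
hypothesis `I = i` the likelihood is `c` if `r = i` and `(1-c)/(K-1)` otherwise.
Candidates are indexed by `Fin K`, with index `0` playing the role of the index `1`
(the correct answer). -/
noncomputable def ell (K : ℕ) (i r : Fin K) (c : ℝ) : ℝ :=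
  if r = i then c else (1 - c) / ((K : ℝ) - 1)

/-- Unnormalized posterior `A j (m) = ∏_{t=1}^m ℓ_j (R_t, C_t)`. -/
noncomputable def Apost {Ω : Type*} (K : ℕ) (R : ℕ → Ω → Fin K) (C : ℕ → Ω → ℝ)
    (j : Fin K) (m : ℕ) (ω : Ω) : ℝ :=
  ∏ t ∈ Finset.range m, ell K j (R t ω) (C t ω)

/-- The log-likelihood-ratio weight `log c - log (1-c) + log (K-1)`. -/
noncomputable def Lw (K : ℕ) (c : ℝ) : ℝ :=
  Real.log c - Real.log (1 - c) + Real.log ((K : ℝ) - 1)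

lemma Lw_pos {K : ℕ} (hK : (2:ℝ) ≤ K) {c : ℝ} (hc0 : 0 < c) (hc1 : c < 1)
    (h : 1 < c * K) : 0 < Lw K c := by
  have hKm1 : (0:ℝ) < (K:ℝ) - 1 := by linarith
  have h1c : 0 < 1 - c := by linarith
  have hlt : 1 - c < c * ((K:ℝ) - 1) := by nlinarith
  have := Real.log_lt_log h1c hlt
  rw [Real.log_mul hc0.ne' hKm1.ne'] at this
  unfold Lw; linarith

lemma Lw_neg {K : ℕ} (hK : (2:ℝ) ≤ K) {c : ℝ} (hc0 : 0 < c) (hc1 : c < 1)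
    (h : c * K < 1) : Lw K c < 0 := by
  have hKm1 : (0:ℝ) < (K:ℝ) - 1 := by linarith
  have h1c : 0 < 1 - c := by linarith
  have hlt : c * ((K:ℝ) - 1) < 1 - c := by nlinarith
  have := Real.log_lt_log (by positivity) hlt
  rw [Real.log_mul hc0.ne' hKm1.ne'] at this
  unfold Lw; linarith

/-- The per-step mean `gmean c = Lw c * (c - (1-c)/(K-1))`. -/
noncomputable def gmean (K : ℕ) (c : ℝ) : ℝ :=
  Lw K c * (c - (1 - c) / ((K : ℝ) - 1))

lemma gmean_nonneg {K : ℕ} (hK : (2:ℝ) ≤ K) {c : ℝ} (hc0 : 0 < c) (hc1 : c < 1) :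
    0 ≤ gmean K c := by
  have hKm1 : (0:ℝ) < (K:ℝ) - 1 := by linarith
  have hd : c - (1 - c) / ((K:ℝ) - 1) = (c * K - 1) / ((K:ℝ) - 1) := by
    field_simp; ring
  rcases lt_trichotomy (c * K) 1 with h | h | h
  · have h1 := Lw_neg hK hc0 hc1 h
    have h2 : c - (1 - c) / ((K:ℝ) - 1) ≤ 0 := by
      rw [hd]; exact le_of_lt (div_neg_of_neg_of_pos (by linarith) hKm1)
    exact mul_nonneg_of_nonpos_of_nonpos h1.le h2
  · have : c - (1 - c) / ((K:ℝ) - 1) = 0 := by rw [hd, h]; simp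
    simp [gmean, this]
  · have h1 := Lw_pos hK hc0 hc1 h
    have h2 : 0 ≤ c - (1 - c) / ((K:ℝ) - 1) := by
      rw [hd]; exact div_nonneg (by linarith) hKm1.le
    exact mul_nonneg h1.le h2

lemma gmean_pos {K : ℕ} (hK : (2:ℝ) ≤ K) {c : ℝ} (hc0 : 0 < c) (hc1 : c < 1)
    (hne : c ≠ 1 / K) : 0 < gmean K c := by
  have hKpos : (0:ℝ) < K := by linarith
  have hKm1 : (0:ℝ) < (K:ℝ) - 1 := by linarith
  have hd : c - (1 - c) / ((K:ℝ) - 1) = (c * K - 1) / ((K:ℝ) - 1) := by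
    field_simp; ring
  rcases lt_trichotomy (c * K) 1 with h | h | h
  · have h1 := Lw_neg hK hc0 hc1 h
    have h2 : c - (1 - c) / ((K:ℝ) - 1) < 0 := by
      rw [hd]; exact div_neg_of_neg_of_pos (by linarith) hKm1
    exact mul_pos_of_neg_of_neg h1 h2
  · exact absurd (by field_simp; linarith [h] : c = 1 / (K:ℝ)) hne
  · have h1 := Lw_pos hK hc0 hc1 h
    have h2 : 0 < c - (1 - c) / ((K:ℝ) - 1) := by
      rw [hd]; exact div_pos (by linarith) hKm1
    exact mul_pos h1 h2

theorem stmt3 {Ω : Type*} [MeasurableSpace Ω] (μ : Measure Ω) [IsProbabilityMeasure μ]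
    (K : ℕ) [NeZero K] (hK : 2 ≤ K)
    (R : ℕ → Ω → Fin K) (C : ℕ → Ω → ℝ)
    (hRmeas : ∀ t, Measurable (R t)) (hCmeas : ∀ t, Measurable (C t))
    (hindep : iIndepFun (fun t ω => (R t ω, C t ω)) μ)
    (hident : ∀ t, IdentDistrib (fun ω => (R t ω, C t ω)) (fun ω => (R 0 ω, C 0 ω)) μ μ)
    (hC01 : ∀ t, ∀ᵐ ω ∂μ, C t ω ∈ Set.Ioo (0 : ℝ) 1)
    (hcond : ∀ t, ∀ j : Fin K,
      μ[(fun ω => if R t ω = j then (1 : ℝ) else 0) |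
          MeasurableSpace.comap (C t) inferInstance]
        =ᵐ[μ] fun ω => if j = 0 then C t ω else (1 - C t ω) / ((K : ℝ) - 1))
    (hint : Integrable (fun ω => |Real.log (C 0 ω)| + |Real.log (1 - C 0 ω)|) μ)
    (hinfo : μ {ω | C 0 ω = 1 / (K : ℝ)} = 0) :
    ∀ k : Fin K, k ≠ 0 →
      ∀ᵐ ω ∂μ, Tendsto (fun m => Apost K R C 0 m ω / Apost K R C k m ω) atTop atTop := by
  intro k hk
  have hKr : (2:ℝ) ≤ (K:ℝ) := by exact_mod_cast hK
  have hKm1 : (0:ℝ) < (K:ℝ) - 1 := by linarith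
  set f : Fin K × ℝ → ℝ := fun p =>
    Lw K p.2 * ((if p.1 = 0 then (1:ℝ) else 0) - (if p.1 = k then (1:ℝ) else 0)) with hf
  have hLmeas : Measurable (Lw K) := by
    unfold Lw
    exact (Real.measurable_log.sub
      (Real.measurable_log.comp (measurable_const.sub measurable_id))).add measurable_const
  have hindmeas : ∀ j : Fin K, Measurable (fun p : Fin K × ℝ => if p.1 = j then (1:ℝ) else 0) := by
    intro j
    exact Measurable.ite (measurable_fst (MeasurableSet.singleton j))
      measurable_const measurable_const
  have hfmeas : Measurable f :=
    (hLmeas.comp measurable_snd).mul ((hindmeas 0).sub (hindmeas k))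
  -- per-factor identity
  have hfac : ∀ (r : Fin K) (c : ℝ), c ∈ Set.Ioo (0:ℝ) 1 →
      ell K 0 r c / ell K k r c = Real.exp (f (r, c)) := by
    intro r c hc
    have hc0 : 0 < c := hc.1
    have hc1 : 0 < 1 - c := by linarith [hc.2]
    have hq : 0 < (1 - c)/((K:ℝ)-1) := div_pos hc1 hKm1
    have hexpL : Real.exp (Lw K c) = c * ((K:ℝ)-1) / (1 - c) := by
      rw [Lw, Real.exp_add, Real.exp_sub, Real.exp_log hc0, Real.exp_log hc1,
        Real.exp_log hKm1]
      ring
    simp only [hf, ell]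
    rcases eq_or_ne r 0 with h0 | h0
    · subst h0
      rw [if_pos rfl, if_pos rfl, if_neg (Ne.symm hk), if_neg (Ne.symm hk),
        sub_zero, mul_one, hexpL, div_div_eq_mul_div]
    · rcases eq_or_ne r k with h1 | h1
      · subst h1
        rw [if_neg hk, if_neg hk, if_pos rfl, if_pos rfl, zero_sub, mul_neg, mul_one,
          Real.exp_neg, hexpL, inv_div, div_div, mul_comm c]
      · rw [if_neg h0, if_neg h0, if_neg h1, if_neg h1, sub_self, mul_zero, Real.exp_zero]
        exact div_self hq.ne'
  -- the i.i.d. sequence of log likelihood ratios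
  set X : ℕ → Ω → ℝ := fun t ω => f (R t ω, C t ω) with hX
  have hpairmeas : ∀ t, Measurable (fun ω => (R t ω, C t ω)) :=
    fun t => (hRmeas t).prodMk (hCmeas t)
  have hXmeas : ∀ t, Measurable (X t) := fun t => hfmeas.comp (hpairmeas t)
  have hgint : Integrable
      (fun ω => |Real.log (C 0 ω)| + |Real.log (1 - C 0 ω)| + |Real.log ((K:ℝ)-1)|) μ :=
    hint.add (integrable_const _)
  have hXint : Integrable (X 0) μ := by
    refine hgint.mono' (hXmeas 0).aestronglyMeasurable (ae_of_all _ fun ω => ?_)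
    have h1 : |(if R 0 ω = 0 then (1:ℝ) else 0) - (if R 0 ω = k then 1 else 0)| ≤ 1 := by
      split_ifs <;> norm_num
    have h2 : |Lw K (C 0 ω)| ≤
        |Real.log (C 0 ω)| + |Real.log (1 - C 0 ω)| + |Real.log ((K:ℝ)-1)| := by
      have ha := abs_sub (Real.log (C 0 ω)) (Real.log (1 - C 0 ω))
      have hb := abs_add_le (Real.log (C 0 ω) - Real.log (1 - C 0 ω)) (Real.log ((K:ℝ)-1))
      unfold Lw; linarith
    have : ‖X 0 ω‖ = |Lw K (C 0 ω)| *
        |(if R 0 ω = 0 then (1:ℝ) else 0) - (if R 0 ω = k then 1 else 0)| := by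
      rw [Real.norm_eq_abs, hX, hf, abs_mul]
    rw [this]
    nlinarith [abs_nonneg (Lw K (C 0 ω)),
      abs_nonneg ((if R 0 ω = 0 then (1:ℝ) else 0) - (if R 0 ω = k then 1 else 0))]
  have hXindep : Pairwise (Function.onFun (IndepFun · · μ) X) := fun i j hij =>
    (hindep.indepFun hij).comp hfmeas hfmeas
  have hXident : ∀ t, IdentDistrib (X t) (X 0) μ μ := fun t => (hident t).comp hfmeas
  -- computing the mean via the conditional distribution of R given C
  have hm' : MeasurableSpace.comap (C 0) inferInstance ≤ ‹MeasurableSpace Ω› :=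
    (hCmeas 0).comap_le
  set Y : Fin K → Ω → ℝ := fun j ω => if R 0 ω = j then (1:ℝ) else 0 with hY
  have hYmeas : ∀ j, Measurable (Y j) := fun j =>
    Measurable.ite ((hRmeas 0) (MeasurableSet.singleton j)) measurable_const measurable_const
  have hYint : ∀ j, Integrable (Y j) μ := by
    intro j
    refine (integrable_const (1:ℝ)).mono' (hYmeas j).aestronglyMeasurable
      (ae_of_all _ fun ω => ?_)
    by_cases h : R 0 ω = j <;> simp [hY, h]
  have hLC : StronglyMeasurable[MeasurableSpace.comap (C 0) inferInstance]
      (fun ω => Lw K (C 0 ω)) := by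
    have hCm : Measurable[MeasurableSpace.comap (C 0) inferInstance] (C 0) :=
      measurable_iff_comap_le.mpr le_rfl
    exact (hLmeas.comp hCm).stronglyMeasurable
  have hX0eq : X 0 = (fun ω => Lw K (C 0 ω)) * (Y 0 - Y k) := rfl
  have hmul : μ[X 0 | MeasurableSpace.comap (C 0) inferInstance] =ᵐ[μ]
      (fun ω => Lw K (C 0 ω)) *
        μ[(Y 0 - Y k) | MeasurableSpace.comap (C 0) inferInstance] := by
    rw [hX0eq]
    exact condExp_mul_of_stronglyMeasurable_left hLC (hX0eq ▸ hXint) ((hYint 0).sub (hYint k))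
  have hsub : μ[(Y 0 - Y k) | MeasurableSpace.comap (C 0) inferInstance] =ᵐ[μ]
      fun ω => C 0 ω - (1 - C 0 ω)/((K:ℝ)-1) := by
    have h1 := condExp_sub (m := MeasurableSpace.comap (C 0) inferInstance) (μ := μ)
      (hYint 0) (hYint k)
    have h2 := hcond 0 0
    have h3 := hcond 0 k
    filter_upwards [h1, h2, h3] with ω e1 e2 e3
    rw [e1, Pi.sub_apply]
    simp only [hY] at e2 e3 ⊢
    rw [e2, e3]
    simp [hk]
  have hEeq : μ[X 0] = ∫ ω, gmean K (C 0 ω) ∂μ := by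
    rw [← integral_condExp hm' (f := X 0)]
    refine integral_congr_ae ?_
    filter_upwards [hmul, hsub] with ω e1 e2
    rw [e1, Pi.mul_apply, e2]
    rfl
  -- integrability and positivity of the mean
  have hGmeas : Measurable (fun ω => gmean K (C 0 ω)) := by
    have : Measurable (gmean K) := by
      unfold gmean
      exact hLmeas.mul (measurable_id.sub ((measurable_const.sub measurable_id).div_const _))
    exact this.comp (hCmeas 0)
  have hGint : Integrable (fun ω => gmean K (C 0 ω)) μ := by
    refine hgint.mono' hGmeas.aestronglyMeasurable ?_
    filter_upwards [hC01 0] with ω h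
    have hq1 : (1 - C 0 ω)/((K:ℝ)-1) ≤ 1 := by
      rw [div_le_one hKm1]; linarith [h.1]
    have hq0 : 0 ≤ (1 - C 0 ω)/((K:ℝ)-1) := div_nonneg (by linarith [h.2]) hKm1.le
    have hd : |C 0 ω - (1 - C 0 ω)/((K:ℝ)-1)| ≤ 1 := by
      rw [abs_le]; constructor <;> [linarith [h.1]; linarith [h.2]]
    have h2 : |Lw K (C 0 ω)| ≤
        |Real.log (C 0 ω)| + |Real.log (1 - C 0 ω)| + |Real.log ((K:ℝ)-1)| := by
      have ha := abs_sub (Real.log (C 0 ω)) (Real.log (1 - C 0 ω))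
      have hb := abs_add_le (Real.log (C 0 ω) - Real.log (1 - C 0 ω)) (Real.log ((K:ℝ)-1))
      unfold Lw; linarith
    have : ‖gmean K (C 0 ω)‖ = |Lw K (C 0 ω)| * |C 0 ω - (1 - C 0 ω)/((K:ℝ)-1)| := by
      rw [Real.norm_eq_abs, gmean, abs_mul]
    rw [this]
    nlinarith [abs_nonneg (Lw K (C 0 ω)), abs_nonneg (C 0 ω - (1 - C 0 ω)/((K:ℝ)-1))]
  have hGnn : 0 ≤ᵐ[μ] fun ω => gmean K (C 0 ω) := by
    filter_upwards [hC01 0] with ω h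
    exact gmean_nonneg hKr h.1 h.2
  have hEpos : 0 < μ[X 0] := by
    rw [hEeq, integral_pos_iff_support_of_nonneg_ae hGnn hGint]
    have hne : ∀ᵐ ω ∂μ, gmean K (C 0 ω) ≠ 0 := by
      have hC : ∀ᵐ ω ∂μ, C 0 ω ≠ 1/(K:ℝ) := by
        rw [ae_iff]
        simpa using hinfo
      filter_upwards [hC01 0, hC] with ω h hne
      exact (gmean_pos hKr h.1 h.2 hne).ne'
    have hcompl : μ (Function.support fun ω => gmean K (C 0 ω))ᶜ = 0 := by
      have := ae_iff.mp hne
      simpa [Function.support, Set.compl_setOf] using this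
    by_contra hle
    push_neg at hle
    have h0 : μ (Function.support fun ω => gmean K (C 0 ω)) = 0 :=
      le_antisymm hle zero_le
    have huniv : μ Set.univ ≤ 0 := by
      calc μ Set.univ = μ ((Function.support fun ω => gmean K (C 0 ω)) ∪
          (Function.support fun ω => gmean K (C 0 ω))ᶜ) := by
            rw [Set.union_compl_self]
        _ ≤ μ (Function.support fun ω => gmean K (C 0 ω)) +
            μ (Function.support fun ω => gmean K (C 0 ω))ᶜ := measure_union_le _ _
        _ = 0 := by rw [h0, hcompl, add_zero]
    simp [measure_univ] at huniv
  -- strong law of large numbers and conclusion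
  have hslln := strong_law_ae_real X hXint hXindep hXident
  have hC01all : ∀ᵐ ω ∂μ, ∀ t, C t ω ∈ Set.Ioo (0:ℝ) 1 := ae_all_iff.mpr hC01
  filter_upwards [hslln, hC01all] with ω hω hc
  have hS : Tendsto (fun m : ℕ => ∑ t ∈ Finset.range m, X t ω) atTop atTop := by
    have h1 : Tendsto (fun m : ℕ => (∑ t ∈ Finset.range m, X t ω) / m * m) atTop atTop :=
      Tendsto.pos_mul_atTop hEpos hω tendsto_natCast_atTop_atTop
    refine h1.congr' ?_
    filter_upwards [eventually_ge_atTop 1] with m hm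
    rw [div_mul_cancel₀]
    exact_mod_cast Nat.one_le_iff_ne_zero.mp hm
  have hratio : ∀ m, Real.exp (∑ t ∈ Finset.range m, X t ω) =
      Apost K R C 0 m ω / Apost K R C k m ω := by
    intro m
    rw [Real.exp_sum, Apost, Apost, ← Finset.prod_div_distrib]
    exact Finset.prod_congr rfl fun t _ => (hfac (R t ω) (C t ω) (hc t)).symm
  exact (Real.tendsto_exp_atTop.comp hS).congr hratio
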